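/- arXiv:1901.07114 — 2 statements merged into one kernel-verified Lean document; each statement's English description precedes it below -/
import Mathlib

section
/- Let ℓ : ℝ → ℝ be α-strongly convex and differentiable, K ∈ ℝ^{n×n} symmetric with smallest eigenvalue λ_min(K) ≥ λ > 0, and let Δ ∈ ℝ^n with Δ_i = ℓ'(f_i). Then Δᵀ K Δ ≥ λ ‖Δ‖² ≥ 2αλ · ∑_i (ℓ(f_i) - min ℓ). -/
open Finset Matrix

theorem stmt_11 (n : ℕ) (ℓ : ℝ → ℝ) (α : ℝ) (hα : 0 < α) (hdiff : Differentiable ℝ ℓ)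
    (hsc : ∀ x y : ℝ, ℓ x + deriv ℓ x * (y - x) + α / 2 * (y - x) ^ 2 ≤ ℓ y)
    (K : Matrix (Fin n) (Fin n) ℝ) (hKsym : K.IsSymm)
    (lam : ℝ) (hlam : 0 < lam)
    (hmin : ∀ x : Fin n → ℝ, lam * ∑ i, x i ^ 2 ≤ x ⬝ᵥ K.mulVec x)
    (f : Fin n → ℝ) (Δ : Fin n → ℝ) (hΔ : ∀ i, Δ i = deriv ℓ (f i))
    (m : ℝ) (hm : IsGLB (Set.range ℓ) m) :
    lam * ∑ i, Δ i ^ 2 ≤ Δ ⬝ᵥ K.mulVec Δ ∧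
    2 * α * lam * ∑ i, (ℓ (f i) - m) ≤ lam * ∑ i, Δ i ^ 2 := by
  refine ⟨hmin Δ, ?_⟩
  have key : ∀ i, 2 * α * (ℓ (f i) - m) ≤ Δ i ^ 2 := by
    intro i
    have hlb : (ℓ (f i) - (deriv ℓ (f i)) ^ 2 / (2 * α)) ∈ lowerBounds (Set.range ℓ) := by
      rintro _ ⟨y, rfl⟩
      have h := hsc (f i) y
      have hd : deriv ℓ (f i) ^ 2 / (2 * α) * (2 * α) = deriv ℓ (f i) ^ 2 :=
        div_mul_cancel₀ _ (by positivity)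
      nlinarith [sq_nonneg (α * (y - f i) + deriv ℓ (f i)), hα, hd]
    have hmge := hm.2 hlb
    rw [hΔ i]
    have hd : deriv ℓ (f i) ^ 2 / (2 * α) * (2 * α) = deriv ℓ (f i) ^ 2 :=
      div_mul_cancel₀ _ (by positivity)
    nlinarith [hα, hd, hmge]
  have hsum : ∑ i, 2 * α * (ℓ (f i) - m) ≤ ∑ i, Δ i ^ 2 :=
    Finset.sum_le_sum fun i _ => key i
  calc 2 * α * lam * ∑ i, (ℓ (f i) - m)
      = lam * ∑ i, 2 * α * (ℓ (f i) - m) := by rw [Finset.mul_sum, Finset.mul_sum]; exact Finset.sum_congr rfl fun i _ => by ring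
    _ ≤ lam * ∑ i, Δ i ^ 2 := by
        exact mul_le_mul_of_nonneg_left hsum hlam.le
end

section
/- Let Θ ∼ N(0, I_d) be a standard Gaussian in ℝ^d (d ≥ 2), and let x, x̃ ∈ ℝ^d be unit vectors with t = ⟨x, x̃⟩ and θ = arccos(t). Then E[σ(⟨x,Θ⟩)·σ(⟨x̃,Θ⟩)] = ((π-θ)/(2π))·cos θ + (sin θ)/(2π), where σ(z) = max(z,0). -/
open MeasureTheory Real ProbabilityTheory Set
open scoped ENNReal NNReal RealInnerProductSpace

noncomputable section



namespace ACKernel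

lemma radial_integral : ∫ r in Set.Ioi (0:ℝ), r ^ 3 * rexp (-r ^ 2 / 2) = 2 := by
  have hderiv : ∀ r : ℝ, HasDerivAt (fun r : ℝ => -(r ^ 2 + 2) * rexp (-r ^ 2 / 2))
      (r ^ 3 * rexp (-r ^ 2 / 2)) r := by
    intro r
    have h1 : HasDerivAt (fun r : ℝ => -r ^ 2 / 2) (-r) r := by
      have h := ((hasDerivAt_pow 2 r).neg).div_const 2
      refine h.congr_deriv ?_
      push_cast
      ring
    have h2 : HasDerivAt (fun r : ℝ => rexp (-r ^ 2 / 2)) (rexp (-r ^ 2 / 2) * (-r)) r := h1.exp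
    have h3 : HasDerivAt (fun r : ℝ => -(r ^ 2 + 2)) (-(2 * r)) r := by
      have := ((hasDerivAt_pow 2 r).add_const 2).neg
      exact this.congr_deriv (by simp)
    have := h3.mul h2
    refine this.congr_deriv ?_
    ring
  have hint : IntegrableOn (fun r : ℝ => r ^ 3 * rexp (-r ^ 2 / 2)) (Set.Ioi 0) := by
    have h := (integrable_rpow_mul_exp_neg_mul_sq (b := 1/2) (by norm_num)
      (s := 3) (by norm_num)).integrableOn (s := Set.Ioi 0)
    refine h.congr_fun (fun x hx => ?_) measurableSet_Ioi
    dsimp only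
    rw [show (3:ℝ) = ((3:ℕ):ℝ) by norm_num, Real.rpow_natCast,
      show -(1/2 : ℝ) * x ^ 2 = -x ^ 2 / 2 by ring]
  have htend : Filter.Tendsto (fun r : ℝ => -(r ^ 2 + 2) * rexp (-r ^ 2 / 2))
      Filter.atTop (nhds 0) := by
    have h1 : Filter.Tendsto (fun u : ℝ => -(2 * u + 2) * rexp (-u)) Filter.atTop (nhds 0) := by
      have ha := tendsto_pow_mul_exp_neg_atTop_nhds_zero 1
      have hb := tendsto_pow_mul_exp_neg_atTop_nhds_zero 0
      have := (ha.const_mul (-2)).add (hb.const_mul (-2))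
      simpa using this.congr (fun u => by ring)
    have h2 : Filter.Tendsto (fun r : ℝ => r ^ 2 / 2) Filter.atTop Filter.atTop :=
      (Filter.tendsto_pow_atTop (two_ne_zero)).atTop_div_const (by norm_num)
    have h3 := h1.comp h2
    refine h3.congr fun r => ?_
    show -(2 * (r ^ 2 / 2) + 2) * rexp (-(r ^ 2 / 2)) = _
    rw [show -(r ^ 2 / 2) = -r ^ 2 / 2 by ring]
    ring_nf
  have := integral_Ioi_of_hasDerivAt_of_tendsto
    (f := fun r : ℝ => -(r ^ 2 + 2) * rexp (-r ^ 2 / 2))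
    (f' := fun r : ℝ => r ^ 3 * rexp (-r ^ 2 / 2))
    ((hderiv 0).continuousAt.continuousWithinAt)
    (fun x _ => hderiv x) hint htend
  rw [this]
  norm_num

lemma angular_integral (θ : ℝ) (h0 : 0 ≤ θ) (hπ : θ ≤ π) :
    ∫ a in Set.Ioo (-π) π, max (cos a) 0 * max (cos (a - θ)) 0
      = sin θ / 2 + (π - θ) * cos θ / 2 := by
  have hpi := pi_pos
  have hsub : Set.Ioo (θ - π/2) (π/2) ⊆ Set.Ioo (-π) π :=
    Set.Ioo_subset_Ioo (by linarith) (by linarith)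
  have hpt : ∀ a ∈ Set.Ioo (-π) π, max (cos a) 0 * max (cos (a - θ)) 0
      = Set.indicator (Set.Ioo (θ - π/2) (π/2)) (fun a => cos a * cos (a - θ)) a := by
    intro a ha
    obtain ⟨ha1, ha2⟩ := ha
    by_cases hmem : a ∈ Set.Ioo (θ - π/2) (π/2)
    · obtain ⟨hb1, hb2⟩ := hmem
      rw [Set.indicator_of_mem (by exact ⟨hb1, hb2⟩)]
      have hca : (0:ℝ) ≤ cos a := (cos_pos_of_mem_Ioo ⟨by linarith, hb2⟩).le
      have hcb : (0:ℝ) ≤ cos (a - θ) := (cos_pos_of_mem_Ioo ⟨by linarith, by linarith⟩).le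
      rw [max_eq_left hca, max_eq_left hcb]
    · rw [Set.indicator_of_notMem hmem]
      rw [Set.mem_Ioo, not_and_or, not_lt, not_lt] at hmem
      rcases hmem with h | h
      · rcases le_or_gt (θ - (π + π/2)) a with h4 | h4
        · have hc : cos (a - θ) ≤ 0 := by
            rw [show a - θ = -(θ - a) by ring, cos_neg]
            exact cos_nonpos_of_pi_div_two_le_of_le (by linarith) (by linarith)
          rw [max_eq_right hc, mul_zero]
        · have hc : cos a ≤ 0 := by
            rw [← cos_neg]
            exact cos_nonpos_of_pi_div_two_le_of_le (by linarith) (by linarith)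
          rw [max_eq_right hc, zero_mul]
      · have hc : cos a ≤ 0 := cos_nonpos_of_pi_div_two_le_of_le h (by linarith)
        rw [max_eq_right hc, zero_mul]
  rw [setIntegral_congr_fun measurableSet_Ioo hpt,
    setIntegral_indicator measurableSet_Ioo,
    Set.inter_eq_self_of_subset_right hsub]
  have hle : θ - π/2 ≤ π/2 := by linarith
  rw [← MeasureTheory.integral_Ioc_eq_integral_Ioo, ← intervalIntegral.integral_of_le hle]
  have hftc : ∀ a ∈ Set.uIcc (θ - π/2) (π/2),
      HasDerivAt (fun a : ℝ => sin (2*a - θ)/4 + a * (cos θ / 2)) (cos a * cos (a - θ)) a := by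
    intro a _
    have h1 : HasDerivAt (fun a : ℝ => 2*a - θ) 2 a := by
      simpa using ((hasDerivAt_id a).const_mul 2).sub_const θ
    have h2 : HasDerivAt (fun a : ℝ => sin (2*a - θ)) (cos (2*a - θ) * 2) a := h1.sin
    have h3 := (h2.div_const 4).add (hasDerivAt_mul_const (cos θ / 2))
    refine h3.congr_deriv ?_
    have e1 : cos (2*a - θ) = cos a * cos (a - θ) - sin a * sin (a - θ) := by
      rw [show 2*a - θ = a + (a - θ) by ring, cos_add]
    have e2 := cos_sub a (a - θ)
    rw [show a - (a - θ) = θ by ring] at e2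
    rw [e1, e2]; ring
  rw [intervalIntegral.integral_eq_sub_of_hasDerivAt hftc
    ((Real.continuous_cos.mul (Real.continuous_cos.comp (by continuity))).intervalIntegrable _ _)]
  have s1 : sin (2 * (π/2) - θ) = sin θ := by
    rw [show 2 * (π/2) - θ = π - θ by ring, sin_pi_sub]
  have s2 : sin (2 * (θ - π/2) - θ) = -sin θ := by
    rw [show 2 * (θ - π/2) - θ = -(π - θ) by ring, sin_neg, sin_pi_sub]
  rw [s1, s2]; ring

end ACKernel

namespace ACK2

lemma measurable_gpdf : Measurable (gaussianPDF 0 1) :=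
  (measurable_gaussianPDFReal 0 1).ennreal_ofReal

lemma gauss2d_prod : (gaussianReal 0 1).prod (gaussianReal 0 1)
    = (volume : Measure (ℝ × ℝ)).withDensity
        (fun p => gaussianPDF 0 1 p.1 * gaussianPDF 0 1 p.2) := by
  rw [Measure.volume_eq_prod]
  refine Measure.prod_eq fun s t hs ht => ?_
  rw [withDensity_apply _ (hs.prod ht), ← Measure.prod_restrict,
    lintegral_prod_mul measurable_gpdf.aemeasurable measurable_gpdf.aemeasurable,
    ← gaussianReal_apply 0 one_ne_zero, ← gaussianReal_apply 0 one_ne_zero]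

end ACK2

namespace ACK3

lemma twoD (t s θ : ℝ) (htc : t = cos θ) (hsc : s = sin θ) (hθ0 : 0 ≤ θ) (hθπ : θ ≤ π) :
    ∫ p : ℝ × ℝ, max p.1 0 * max (t * p.1 + s * p.2) 0
        ∂((gaussianReal 0 1).prod (gaussianReal 0 1))
      = (π - θ) / (2 * π) * cos θ + sin θ / (2 * π) := by
  have hpi := pi_pos
  rw [ACK2.gauss2d_prod]
  have hd : (fun p : ℝ × ℝ => gaussianPDF 0 1 p.1 * gaussianPDF 0 1 p.2)
      = fun p : ℝ × ℝ =>
        (((gaussianPDFReal 0 1 p.1).toNNReal * (gaussianPDFReal 0 1 p.2).toNNReal : ℝ≥0) : ℝ≥0∞) := by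
    funext p
    simp [gaussianPDF, ENNReal.ofReal, ENNReal.coe_mul]
  have hm : Measurable (fun p : ℝ × ℝ =>
      (gaussianPDFReal 0 1 p.1).toNNReal * (gaussianPDFReal 0 1 p.2).toNNReal) :=
    (((measurable_gaussianPDFReal 0 1).comp measurable_fst).real_toNNReal.mul
      ((measurable_gaussianPDFReal 0 1).comp measurable_snd).real_toNNReal)
  rw [hd, integral_withDensity_eq_integral_smul hm]
  have hint : ∀ p : ℝ × ℝ,
      (((gaussianPDFReal 0 1 p.1).toNNReal * (gaussianPDFReal 0 1 p.2).toNNReal : ℝ≥0) : ℝ)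
        = gaussianPDFReal 0 1 p.1 * gaussianPDFReal 0 1 p.2 := by
    intro p
    push_cast
    rw [Real.coe_toNNReal _ (gaussianPDFReal_nonneg 0 1 _),
      Real.coe_toNNReal _ (gaussianPDFReal_nonneg 0 1 _)]
  have hrw : (fun p : ℝ × ℝ =>
      (((gaussianPDFReal 0 1 p.1).toNNReal * (gaussianPDFReal 0 1 p.2).toNNReal : ℝ≥0))
        • (max p.1 0 * max (t * p.1 + s * p.2) 0))
      = fun p : ℝ × ℝ => (gaussianPDFReal 0 1 p.1 * gaussianPDFReal 0 1 p.2)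
          * (max p.1 0 * max (t * p.1 + s * p.2) 0) := by
    funext p
    rw [NNReal.smul_def, smul_eq_mul, hint p]
  rw [hrw, ← integral_comp_polarCoord_symm]
  have hpt : ∀ p ∈ polarCoord.target,
      p.1 • ((fun p : ℝ × ℝ => (gaussianPDFReal 0 1 p.1 * gaussianPDFReal 0 1 p.2)
          * (max p.1 0 * max (t * p.1 + s * p.2) 0)) (polarCoord.symm p))
      = (p.1 ^ 3 * rexp (-p.1 ^ 2 / 2)) *
          ((1 / (2 * π)) * (max (cos p.2) 0 * max (cos (p.2 - θ)) 0)) := by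
    rintro ⟨r, a⟩ ⟨hr, -⟩
    simp only [Set.mem_Ioi] at hr
    rw [polarCoord_symm_apply]
    simp only [smul_eq_mul]
    have hpdf : ∀ u : ℝ, gaussianPDFReal 0 1 u = (√(2 * π))⁻¹ * rexp (-u ^ 2 / 2) := by
      intro u
      simp [gaussianPDFReal]
    rw [hpdf, hpdf]
    have hexp : rexp (-(r * cos a) ^ 2 / 2) * rexp (-(r * sin a) ^ 2 / 2)
        = rexp (-r ^ 2 / 2) := by
      rw [← Real.exp_add]
      congr 1
      have := sin_sq_add_cos_sq a
      nlinarith [this]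
    have hmax1 : max (r * cos a) 0 = r * max (cos a) 0 := by
      rw [mul_max_of_nonneg _ _ hr.le, mul_zero]
    have hmax2 : max (t * (r * cos a) + s * (r * sin a)) 0 = r * max (cos (a - θ)) 0 := by
      rw [mul_max_of_nonneg _ _ hr.le, mul_zero]
      congr 1
      rw [cos_sub, htc, hsc]
      ring
    have hsq : (√(2 * π))⁻¹ * (√(2 * π))⁻¹ = 1 / (2 * π) := by
      rw [← mul_inv, Real.mul_self_sqrt (by positivity), one_div]
    rw [hmax1, hmax2]
    calc r * ((√(2 * π))⁻¹ * rexp (-(r * cos a) ^ 2 / 2) *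
            ((√(2 * π))⁻¹ * rexp (-(r * sin a) ^ 2 / 2)) *
            (r * max (cos a) 0 * (r * max (cos (a - θ)) 0)))
        = r ^ 3 * (rexp (-(r * cos a) ^ 2 / 2) * rexp (-(r * sin a) ^ 2 / 2)) *
            (((√(2 * π))⁻¹ * (√(2 * π))⁻¹) * (max (cos a) 0 * max (cos (a - θ)) 0)) := by
          ring
      _ = _ := by rw [hexp, hsq]
  rw [setIntegral_congr_fun polarCoord.open_target.measurableSet hpt]
  rw [Measure.volume_eq_prod,
    show polarCoord.target = Set.Ioi (0:ℝ) ×ˢ Set.Ioo (-π) π from rfl]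
  rw [MeasureTheory.setIntegral_prod_mul (μ := volume) (ν := volume)
    (f := fun r : ℝ => r ^ 3 * rexp (-r ^ 2 / 2))
    (g := fun a : ℝ => (1 / (2 * π)) * (max (cos a) 0 * max (cos (a - θ)) 0))
    (Set.Ioi 0) (Set.Ioo (-π) π)]
  rw [ACKernel.radial_integral]
  rw [MeasureTheory.integral_const_mul, ACKernel.angular_integral θ hθ0 hθπ]
  field_simp
  ring
end ACK3




namespace ACKA

lemma map_withDensity_equiv {α β : Type*} [MeasurableSpace α] [MeasurableSpace β]
    (me : α ≃ᵐ β) (μ : Measure α) (f : β → ℝ≥0∞) (hf : Measurable f) :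
    (μ.withDensity (fun a => f (me a))).map me = (μ.map me).withDensity f := by
  ext s hs
  rw [Measure.map_apply me.measurable hs,
    withDensity_apply _ (me.measurable hs),
    withDensity_apply _ hs,
    setLIntegral_map hs hf me.measurable]

lemma gaussPi_eq (d : ℕ) :
    (Measure.pi fun _ : Fin d => gaussianReal 0 1)
      = (volume : Measure (Fin d → ℝ)).withDensity
          (fun Θ => ∏ i, gaussianPDF 0 1 (Θ i)) := by
  refine Measure.pi_eq fun s hs => ?_
  rw [withDensity_apply _ (MeasurableSet.univ_pi hs),
    ← lintegral_indicator (MeasurableSet.univ_pi hs)]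
  have hpt : ∀ Θ : Fin d → ℝ,
      Set.indicator (Set.univ.pi s) (fun Θ => ∏ i, gaussianPDF 0 1 (Θ i)) Θ
        = ∏ i, ENNReal.ofReal (Set.indicator (s i) (gaussianPDFReal 0 1) (Θ i)) := by
    intro Θ
    by_cases h : Θ ∈ Set.univ.pi s
    · rw [Set.indicator_of_mem h]
      refine Finset.prod_congr rfl fun i _ => ?_
      rw [Set.indicator_of_mem (h i (Set.mem_univ i))]
      rfl
    · rw [Set.indicator_of_notMem h]
      rw [Set.mem_univ_pi] at h; push_neg at h
      obtain ⟨i, hi⟩ := h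
      refine (Finset.prod_eq_zero (Finset.mem_univ i) ?_).symm
      rw [Set.indicator_of_notMem hi]
      simp
  simp_rw [hpt]
  have hInt : ∀ i : Fin d, Integrable (Set.indicator (s i) (gaussianPDFReal 0 1)) :=
    fun i => (integrable_gaussianPDFReal 0 1).indicator (hs i)
  have hnn : ∀ (i : Fin d) (u : ℝ), 0 ≤ Set.indicator (s i) (gaussianPDFReal 0 1) u :=
    fun i u => Set.indicator_apply_nonneg (fun _ => gaussianPDFReal_nonneg 0 1 u)
  have step1 : ∀ Θ : Fin d → ℝ,
      ∏ i, ENNReal.ofReal (Set.indicator (s i) (gaussianPDFReal 0 1) (Θ i))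
        = ENNReal.ofReal (∏ i, Set.indicator (s i) (gaussianPDFReal 0 1) (Θ i)) :=
    fun Θ => (ENNReal.ofReal_prod_of_nonneg (fun i _ => hnn i (Θ i))).symm
  simp_rw [step1]
  rw [volume_pi, ← ofReal_integral_eq_lintegral_ofReal (Integrable.fintype_prod hInt)
    (Filter.Eventually.of_forall fun Θ => Finset.prod_nonneg fun i _ => hnn i (Θ i))]
  rw [MeasureTheory.integral_fintype_prod_eq_prod
    (fun i => Set.indicator (s i) (gaussianPDFReal 0 1))]
  rw [ENNReal.ofReal_prod_of_nonneg
    (fun i _ => integral_nonneg (fun u => hnn i u))]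
  refine Finset.prod_congr rfl fun i _ => ?_
  rw [gaussianReal_apply_eq_integral 0 one_ne_zero, integral_indicator (hs i)]

end ACKA

namespace ACKB

abbrev eqvE (d : ℕ) : EuclideanSpace ℝ (Fin d) ≃ᵐ (Fin d → ℝ) :=
  (MeasurableEquiv.toLp 2 (Fin d → ℝ)).symm

lemma gaussE_def (d : ℕ) :
    (Measure.pi fun _ : Fin d => gaussianReal 0 1).map (eqvE d).symm
      = (volume : Measure (EuclideanSpace ℝ (Fin d))).withDensity
          (fun θ => ENNReal.ofReal ((√(2 * π))⁻¹ ^ d * rexp (-‖θ‖ ^ 2 / 2))) := by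
  rw [ACKA.gaussPi_eq d]
  have hD : (fun Θ : Fin d → ℝ => ∏ i, gaussianPDF 0 1 (Θ i))
      = fun Θ : Fin d → ℝ => (fun θ : EuclideanSpace ℝ (Fin d) =>
          ENNReal.ofReal ((√(2 * π))⁻¹ ^ d * rexp (-‖θ‖ ^ 2 / 2))) ((eqvE d).symm Θ) := by
    funext Θ
    have hcoord : ∀ i, ((eqvE d).symm Θ) i = Θ i := fun i => rfl
    have hn : ‖(eqvE d).symm Θ‖ ^ 2 = ∑ i, (Θ i) ^ 2 := by
      rw [EuclideanSpace.norm_eq]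
      rw [Real.sq_sqrt (by positivity)]
      refine Finset.sum_congr rfl fun i _ => ?_
      rw [hcoord i, Real.norm_eq_abs, sq_abs]
    have hpdf : ∀ i, gaussianPDFReal 0 1 (Θ i) = (√(2 * π))⁻¹ * rexp (-(Θ i) ^ 2 / 2) := by
      intro i; simp [gaussianPDFReal]
    calc ∏ i, gaussianPDF 0 1 (Θ i)
        = ENNReal.ofReal (∏ i, gaussianPDFReal 0 1 (Θ i)) :=
          (ENNReal.ofReal_prod_of_nonneg (fun i _ => gaussianPDFReal_nonneg 0 1 _)).symm
      _ = _ := by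
          congr 1
          rw [Finset.prod_congr rfl fun i _ => hpdf i, Finset.prod_mul_distrib,
            Finset.prod_const, ← Real.exp_sum, hn]
          simp only [Finset.card_univ, Fintype.card_fin]
          congr 1
          rw [← Finset.sum_neg_distrib, Finset.sum_div]
  have hm : Measurable (fun θ : EuclideanSpace ℝ (Fin d) =>
      ENNReal.ofReal ((√(2 * π))⁻¹ ^ d * rexp (-‖θ‖ ^ 2 / 2))) := by
    have hc : Continuous (fun θ : EuclideanSpace ℝ (Fin d) =>
        (√(2 * π))⁻¹ ^ d * rexp (-‖θ‖ ^ 2 / 2)) := by continuity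
    exact hc.measurable.ennreal_ofReal
  rw [hD]
  exact (ACKA.map_withDensity_equiv (eqvE d).symm volume _ hm).trans
    (by rw [MeasurePreserving.map_eq ((EuclideanSpace.volume_preserving_symm_measurableEquiv_toLp (Fin d)).symm _)])

end ACKB

namespace ACKC

lemma gaussE_map (d : ℕ) (e : EuclideanSpace ℝ (Fin d) ≃ₗᵢ[ℝ] EuclideanSpace ℝ (Fin d)) :
    ((Measure.pi fun _ : Fin d => gaussianReal 0 1).map (ACKB.eqvE d).symm).map e
      = (Measure.pi fun _ : Fin d => gaussianReal 0 1).map (ACKB.eqvE d).symm := by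
  rw [ACKB.gaussE_def]
  set DE : EuclideanSpace ℝ (Fin d) → ℝ≥0∞ :=
    fun θ => ENNReal.ofReal ((√(2 * π))⁻¹ ^ d * rexp (-‖θ‖ ^ 2 / 2)) with hDE
  have hm : Measurable DE := by
    have hc : Continuous (fun θ : EuclideanSpace ℝ (Fin d) =>
        (√(2 * π))⁻¹ ^ d * rexp (-‖θ‖ ^ 2 / 2)) := by continuity
    exact hc.measurable.ennreal_ofReal
  set me := e.toHomeomorph.toMeasurableEquiv with hme
  have hco : (⇑me : EuclideanSpace ℝ (Fin d) → EuclideanSpace ℝ (Fin d)) = ⇑e := rfl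
  have hinv : (fun θ => DE (me θ)) = DE := by
    funext θ
    simp only [hDE, hco]
    rw [e.norm_map]
  calc (volume.withDensity DE).map ⇑e
      = (volume.withDensity (fun θ => DE (me θ))).map ⇑me := by rw [hinv, hco]
    _ = (volume.map ⇑me).withDensity DE := ACKA.map_withDensity_equiv me volume DE hm
    _ = volume.withDensity DE := by
        rw [show (volume.map ⇑me : Measure (EuclideanSpace ℝ (Fin d))) = volume from
          (e.measurePreserving).map_eq]

lemma pi_map_proj2 (d : ℕ) (i j : Fin d) (hij : i ≠ j) :
    (Measure.pi fun _ : Fin d => gaussianReal 0 1).map (fun Θ : Fin d → ℝ => (Θ i, Θ j))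
      = (gaussianReal 0 1).prod (gaussianReal 0 1) := by
  refine (Measure.prod_eq fun s t hs ht => ?_).symm
  rw [Measure.map_apply ((measurable_pi_apply i).prodMk (measurable_pi_apply j)) (hs.prod ht)]
  classical
  have hpre : (fun Θ : Fin d → ℝ => (Θ i, Θ j)) ⁻¹' (s ×ˢ t)
      = Set.univ.pi (fun k => if k = i then s else if k = j then t else Set.univ) := by
    ext Θ
    simp only [Set.mem_preimage, Set.mem_prod, Set.mem_univ_pi]
    constructor
    · rintro ⟨h1, h2⟩ k
      by_cases hk0 : k = i
      · subst hk0; simpa using h1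
      · by_cases hk1 : k = j
        · subst hk1; simp [hk0, h2]
        · simp [hk0, hk1]
    · intro h
      have h0 := h i
      have h1 := h j
      simp only [if_pos rfl] at h0
      rw [if_neg (Ne.symm hij), if_pos rfl] at h1
      exact ⟨h0, h1⟩
  rw [hpre, Measure.pi_pi]
  have hother : ∀ k ∈ Finset.univ, k ∉ ({i, j} : Finset (Fin d)) →
      gaussianReal 0 1 ((fun k => if k = i then s else if k = j then t else Set.univ) k) = 1 := by
    intro k _ hk
    simp only [Finset.mem_insert, Finset.mem_singleton, not_or] at hk
    simp [hk.1, hk.2]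
  rw [← Finset.prod_subset (Finset.subset_univ ({i, j} : Finset (Fin d))) hother,
    Finset.prod_pair hij]
  simp [Ne.symm hij]

end ACKC

namespace ACKD

lemma joint_law (d : ℕ) (hd : 2 ≤ d) (x y : Fin d → ℝ)
    (hx : ∑ i, x i ^ 2 = 1) (hy : ∑ i, y i ^ 2 = 1) (hxy : ∑ i, x i * y i = 0) :
    (Measure.pi fun _ : Fin d => gaussianReal 0 1).map
        (fun Θ : Fin d → ℝ => (∑ i, x i * Θ i, ∑ i, y i * Θ i))
      = (gaussianReal 0 1).prod (gaussianReal 0 1) := by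
  classical
  set i0 : Fin d := ⟨0, by omega⟩ with hi0
  set i1 : Fin d := ⟨1, by omega⟩ with hi1
  have hij : i0 ≠ i1 := by simp [hi0, hi1, Fin.ext_iff]
  set X : EuclideanSpace ℝ (Fin d) := (WithLp.equiv 2 (Fin d → ℝ)).symm x with hX
  set Y : EuclideanSpace ℝ (Fin d) := (WithLp.equiv 2 (Fin d → ℝ)).symm y with hY
  have hinner : ∀ a b : Fin d → ℝ,
      (inner ℝ ((WithLp.equiv 2 (Fin d → ℝ)).symm a) ((WithLp.equiv 2 (Fin d → ℝ)).symm b) : ℝ)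
        = ∑ i, a i * b i := by
    intro a b
    rw [PiLp.inner_apply]
    simp [mul_comm]
  have hXX : (inner ℝ X X : ℝ) = 1 := by rw [hX, hinner]; simpa [pow_two] using hx
  have hYY : (inner ℝ Y Y : ℝ) = 1 := by rw [hY, hinner]; simpa [pow_two] using hy
  have hXY : (inner ℝ X Y : ℝ) = 0 := by rw [hX, hY, hinner]; exact hxy
  have hYX : (inner ℝ Y X : ℝ) = 0 := by rw [real_inner_comm]; exact hXY
  set v : Fin d → EuclideanSpace ℝ (Fin d) := fun k => if k = i0 then X else Y with hv
  have hortho : Orthonormal ℝ (Set.restrict {i0, i1} v) := by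
    rw [orthonormal_iff_ite]
    rintro ⟨a, ha⟩ ⟨b, hb⟩
    simp only [Set.mem_insert_iff, Set.mem_singleton_iff] at ha hb
    rcases ha with ha | ha <;> rcases hb with hb | hb <;> subst ha <;> subst hb <;>
      simp [hv, hij, Ne.symm hij, Subtype.ext_iff, Set.restrict, (by rw [norm_eq_sqrt_real_inner, hXX, Real.sqrt_one] : ‖X‖ = 1), (by rw [norm_eq_sqrt_real_inner, hYY, Real.sqrt_one] : ‖Y‖ = 1), hXX, hYY, hXY, hYX]
  have hcard : Module.finrank ℝ (EuclideanSpace ℝ (Fin d)) = Fintype.card (Fin d) := by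
    simp [finrank_euclideanSpace]
  obtain ⟨b, hb⟩ := hortho.exists_orthonormalBasis_extension_of_card_eq hcard
  have hb0 : b i0 = X := by rw [hb i0 (by simp)]; simp [hv]
  have hb1 : b i1 = Y := by rw [hb i1 (by simp)]; simp [hv, Ne.symm hij]
  have key : (fun Θ : Fin d → ℝ => (∑ i, x i * Θ i, ∑ i, y i * Θ i))
      = (fun w : EuclideanSpace ℝ (Fin d) => (w i0, w i1)) ∘ (⇑b.repr ∘ ⇑(ACKB.eqvE d).symm) := by
    funext Θ
    have h0 : b.repr ((ACKB.eqvE d).symm Θ) i0 = ∑ i, x i * Θ i := by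
      rw [b.repr_apply_apply, hb0, hX]
      exact hinner x Θ
    have h1 : b.repr ((ACKB.eqvE d).symm Θ) i1 = ∑ i, y i * Θ i := by
      rw [b.repr_apply_apply, hb1, hY]
      exact hinner y Θ
    simp only [Function.comp_apply, h0, h1]
  rw [key]
  have hm1 : Measurable (⇑b.repr ∘ ⇑(ACKB.eqvE d).symm) :=
    (b.repr.continuous.measurable).comp (ACKB.eqvE d).symm.measurable
  have hm2 : Measurable (fun w : EuclideanSpace ℝ (Fin d) => (w i0, w i1)) :=
    ((measurable_pi_apply i0).prodMk (measurable_pi_apply i1)).comp (ACKB.eqvE d).measurable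
  rw [← Measure.map_map hm2 hm1]
  have hmid : (Measure.pi fun _ : Fin d => gaussianReal 0 1).map (⇑b.repr ∘ ⇑(ACKB.eqvE d).symm)
      = (Measure.pi fun _ : Fin d => gaussianReal 0 1).map ⇑(ACKB.eqvE d).symm := by
    rw [← Measure.map_map b.repr.continuous.measurable (ACKB.eqvE d).symm.measurable]
    exact ACKC.gaussE_map d b.repr
  rw [hmid]
  rw [Measure.map_map hm2 (ACKB.eqvE d).symm.measurable]
  have hpr : (fun w : EuclideanSpace ℝ (Fin d) => (w i0, w i1)) ∘ ⇑(ACKB.eqvE d).symm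
      = fun Θ : Fin d → ℝ => (Θ i0, Θ i1) := rfl
  rw [hpr, ACKC.pi_map_proj2 d i0 i1 hij]

end ACKD



namespace ACKE

lemma exists_y (d : ℕ) (hd : 2 ≤ d) (x x' : Fin d → ℝ)
    (hx : ∑ i, x i ^ 2 = 1) (hx' : ∑ i, x' i ^ 2 = 1)
    (t s : ℝ) (ht : t = ∑ i, x i * x' i) (hst : s ^ 2 + t ^ 2 = 1) (hs0 : 0 ≤ s) :
    ∃ y : Fin d → ℝ, (∑ i, y i ^ 2 = 1) ∧ (∑ i, x i * y i = 0)
      ∧ (∀ i, x' i = t * x i + s * y i) := by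
  have hsumsub : ∑ i, (x' i - t * x i) ^ 2 = s ^ 2 := by
    have expand : ∀ i : Fin d, (x' i - t * x i) ^ 2
        = x' i ^ 2 - 2 * t * (x i * x' i) + t ^ 2 * x i ^ 2 := fun i => by ring
    rw [Finset.sum_congr rfl fun i _ => expand i, Finset.sum_add_distrib,
      Finset.sum_sub_distrib, ← Finset.mul_sum, ← Finset.mul_sum, hx', ← ht, hx]
    nlinarith [hst]
  by_cases hs : s = 0
  · subst hs
    have hxx' : ∀ i, x' i = t * x i := by
      intro i
      have hz := (Finset.sum_eq_zero_iff_of_nonneg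
        (fun i _ => sq_nonneg (x' i - t * x i))).mp (by simpa using hsumsub) i (Finset.mem_univ i)
      have := sq_eq_zero_iff.mp hz
      linarith [sub_eq_zero.mp this]
    -- find a unit vector orthogonal to x
    set X : EuclideanSpace ℝ (Fin d) := (WithLp.equiv 2 (Fin d → ℝ)).symm x with hX
    have hinner : ∀ (a : Fin d → ℝ) (W : EuclideanSpace ℝ (Fin d)),
        (inner ℝ ((WithLp.equiv 2 (Fin d → ℝ)).symm a) W : ℝ) = ∑ i, a i * W i := by
      intro a W
      rw [PiLp.inner_apply]
      simp [mul_comm]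
    have hXne : X ≠ 0 := by
      intro h
      have h2 : (inner ℝ X X : ℝ) = 0 := by rw [h]; simp
      rw [hX, hinner] at h2
      have h3 : ∑ i, x i * ((WithLp.equiv 2 (Fin d → ℝ)).symm x) i = ∑ i, x i ^ 2 :=
        Finset.sum_congr rfl fun i _ => by simp [sq]
      rw [h3, hx] at h2
      norm_num at h2
    have hspan : (ℝ ∙ X) ≠ ⊤ := by
      intro h
      have h1 : Module.finrank ℝ (ℝ ∙ X) = 1 := finrank_span_singleton hXne
      have h2 : Module.finrank ℝ (EuclideanSpace ℝ (Fin d)) = d := by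
        simp [finrank_euclideanSpace]
      rw [h, finrank_top] at h1
      omega
    have hbot : (ℝ ∙ X)ᗮ ≠ ⊥ := by
      intro h
      exact hspan (Submodule.orthogonal_eq_bot_iff.mp h)
    obtain ⟨Z, hZmem, hZne⟩ := Submodule.exists_mem_ne_zero_of_ne_bot hbot
    set Y : EuclideanSpace ℝ (Fin d) := ‖Z‖⁻¹ • Z with hYdef
    have hYnorm : ‖Y‖ = 1 := by
      rw [hYdef, norm_smul, norm_inv, norm_norm]
      field_simp [norm_ne_zero_iff.mpr hZne]
    have hXYinner : (inner ℝ X Y : ℝ) = 0 := by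
      rw [hYdef, inner_smul_right]
      have := (Submodule.mem_orthogonal _ Z).mp hZmem X (Submodule.mem_span_singleton_self X)
      rw [this]
      ring
    refine ⟨fun i => Y i, ?_, ?_, ?_⟩
    · have h1 := congrArg (· ^ 2) hYnorm
      simp only [one_pow] at h1
      rw [EuclideanSpace.norm_eq, Real.sq_sqrt (by positivity)] at h1
      rw [← h1]
      exact Finset.sum_congr rfl fun i _ => by rw [Real.norm_eq_abs, sq_abs]
    · rw [← hXYinner, hX, hinner]
    · intro i
      rw [hxx' i]
      ring
  · refine ⟨fun i => (x' i - t * x i) / s, ?_, ?_, ?_⟩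
    · have expand : ∀ i : Fin d, ((x' i - t * x i) / s) ^ 2
        = (x' i - t * x i) ^ 2 / s ^ 2 := fun i => by rw [div_pow]
      rw [Finset.sum_congr rfl fun i _ => expand i, ← Finset.sum_div, hsumsub]
      field_simp
    · have expand : ∀ i : Fin d, x i * ((x' i - t * x i) / s)
        = (x i * x' i - t * x i ^ 2) / s := fun i => by field_simp
      rw [Finset.sum_congr rfl fun i _ => expand i, ← Finset.sum_div,
        Finset.sum_sub_distrib, ← Finset.mul_sum, ← ht, hx]
      simp [sub_self]
    · intro i
      field_simp
      ring

end ACKE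

end

theorem stmt_12 (d : ℕ) (hd : 2 ≤ d) (x x' : Fin d → ℝ)
    (hx : ∑ i, x i ^ 2 = 1) (hx' : ∑ i, x' i ^ 2 = 1)
    (t θ : ℝ) (ht : t = ∑ i, x i * x' i) (hθ : θ = Real.arccos t) :
    ∫ Θ : Fin d → ℝ, max (∑ i, x i * Θ i) 0 * max (∑ i, x' i * Θ i) 0
        ∂(Measure.pi fun _ : Fin d => gaussianReal 0 1)
      = (π - θ) / (2 * π) * Real.cos θ + Real.sin θ / (2 * π) := by
  have hcs : t ^ 2 ≤ 1 := by
    have h := Finset.sum_mul_sq_le_sq_mul_sq Finset.univ x x'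
    rw [hx, hx'] at h
    calc t ^ 2 = (∑ i, x i * x' i) ^ 2 := by rw [ht]
      _ ≤ 1 := by simpa using h
  have ht1 : -1 ≤ t := by nlinarith
  have ht2 : t ≤ 1 := by nlinarith
  have hts : t = Real.cos θ := by rw [hθ, Real.cos_arccos ht1 ht2]
  have hθ0 : 0 ≤ θ := hθ ▸ Real.arccos_nonneg t
  have hθπ : θ ≤ π := hθ ▸ Real.arccos_le_pi t
  set s : ℝ := Real.sin θ with hsdef
  have hs0 : 0 ≤ s := Real.sin_nonneg_of_nonneg_of_le_pi hθ0 hθπ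
  have hst : s ^ 2 + t ^ 2 = 1 := by rw [hsdef, hts]; exact Real.sin_sq_add_cos_sq θ
  obtain ⟨y, hy1, hy2, hy3⟩ := ACKE.exists_y d hd x x' hx hx' t s ht hst hs0
  have hT : Measurable (fun Θ : Fin d → ℝ => (∑ i, x i * Θ i, ∑ i, y i * Θ i)) := by
    refine Measurable.prodMk ?_ ?_ <;>
      exact Finset.measurable_sum _ fun i _ => (measurable_pi_apply i).const_mul _
  have hg : Continuous (fun p : ℝ × ℝ => max p.1 0 * max (t * p.1 + s * p.2) 0) := by
    fun_prop
  have h1 : ∫ Θ : Fin d → ℝ, max (∑ i, x i * Θ i) 0 * max (∑ i, x' i * Θ i) 0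
        ∂(Measure.pi fun _ : Fin d => gaussianReal 0 1)
      = ∫ p : ℝ × ℝ, max p.1 0 * max (t * p.1 + s * p.2) 0
        ∂((Measure.pi fun _ : Fin d => gaussianReal 0 1).map
            (fun Θ : Fin d → ℝ => (∑ i, x i * Θ i, ∑ i, y i * Θ i))) := by
    rw [integral_map hT.aemeasurable hg.aestronglyMeasurable]
    refine integral_congr_ae (Filter.Eventually.of_forall fun Θ => ?_)
    have hx'sum : ∑ i, x' i * Θ i = t * (∑ i, x i * Θ i) + s * (∑ i, y i * Θ i) := by
      rw [Finset.mul_sum, Finset.mul_sum, ← Finset.sum_add_distrib]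
      exact Finset.sum_congr rfl fun i _ => by rw [hy3 i]; ring
    simp only [hx'sum]
  rw [h1, ACKD.joint_law d hd x y hx hy1 hy2]
  exact ACK3.twoD t s θ hts rfl hθ0 hθπ
end
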